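/- If S is the set of size k produced by the greedy algorithm that at each step adds a vertex maximizing the marginal gain of g, and S* is an optimal set of size k maximizing g, then g(S) ≥ (1 − 1/e) · g(S*). -/

import Mathlib

/-- Telescoping submodularity bound. -/
lemma tele_bound {V : Type*} [DecidableEq V]
    (g : Finset V → ℝ)
    (hsub : ∀ (S T : Finset V) (x : V), S ⊆ T → x ∉ T →
      g (insert x T) - g T ≤ g (insert x S) - g S)
    (S T : Finset V) :
    g (S ∪ T) ≤ g S + ∑ x ∈ T, (g (insert x S) - g S) := by
  classical
  induction T using Finset.induction_on with
  | empty => simp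
  | @insert a T' ha ih =>
    rw [Finset.sum_insert ha]
    have h1 : g (S ∪ insert a T') = g (insert a (S ∪ T')) := by
      congr 1
      ext y; simp [or_left_comm]
    rw [h1]
    by_cases haS : a ∈ S ∪ T'
    · have : insert a (S ∪ T') = S ∪ T' := Finset.insert_eq_self.mpr haS
      rw [this]
      have haS' : a ∈ S := by
        rcases Finset.mem_union.mp haS with h | h
        · exact h
        · exact absurd h ha
      have : insert a S = S := Finset.insert_eq_self.mpr haS'
      rw [this]
      linarith
    · have h2 := hsub S (S ∪ T') a Finset.subset_union_left haS
      linarith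

/-- Greedy gives a `(1 - 1/e)`-approximation for maximizing a monotone
submodular function `g` with `g ∅ = 0` under a cardinality constraint `k`. -/
theorem stmt_3 {V : Type*} [Fintype V] [DecidableEq V]
    (g : Finset V → ℝ) (hnonneg : ∀ S, 0 ≤ g S) (hempty : g (∅ : Finset V) = 0)
    (hmono : ∀ S T : Finset V, S ⊆ T → g S ≤ g T)
    (hsub : ∀ (S T : Finset V) (x : V), S ⊆ T → x ∉ T →
      g (insert x T) - g T ≤ g (insert x S) - g S)
    (k : ℕ)
    (Sseq : ℕ → Finset V) (h0 : Sseq 0 = ∅)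
    (hgreedy : ∀ i < k, ∃ x ∉ Sseq i, Sseq (i + 1) = insert x (Sseq i) ∧
      ∀ y ∉ Sseq i,
        g (insert y (Sseq i)) - g (Sseq i) ≤ g (insert x (Sseq i)) - g (Sseq i))
    (Sstar : Finset V) (hcard : Sstar.card = k)
    (hopt : ∀ S' : Finset V, S'.card = k → g S' ≤ g Sstar) :
    (1 - 1 / Real.exp 1) * g Sstar ≤ g (Sseq k) := by
  rcases Nat.eq_zero_or_pos k with hk0 | hkpos
  · subst hk0
    have hSe : Sstar = ∅ := Finset.card_eq_zero.mp hcard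
    rw [h0, hSe, hempty]
    simp
  set kr : ℝ := (k : ℝ) with hkr
  have hkr1 : (1 : ℝ) ≤ kr := by rw [hkr]; exact_mod_cast Nat.one_le_iff_ne_zero.mpr hkpos.ne'
  have hkrpos : (0 : ℝ) < kr := by linarith
  -- key per-step inequality
  have key : ∀ i < k, g Sstar - g (Sseq i) ≤ kr * (g (Sseq (i + 1)) - g (Sseq i)) := by
    intro i hi
    obtain ⟨x, hx, hins, hmax⟩ := hgreedy i hi
    have hm : 0 ≤ g (Sseq (i + 1)) - g (Sseq i) := by
      rw [hins]
      have := hmono (Sseq i) (insert x (Sseq i)) (Finset.subset_insert _ _)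
      linarith
    have h1 : g Sstar ≤ g (Sseq i ∪ Sstar) :=
      hmono _ _ Finset.subset_union_right
    have h2 := tele_bound g hsub (Sseq i) Sstar
    have h3 : ∑ y ∈ Sstar, (g (insert y (Sseq i)) - g (Sseq i))
        ≤ ∑ y ∈ Sstar, (g (Sseq (i + 1)) - g (Sseq i)) := by
      apply Finset.sum_le_sum
      intro y _
      by_cases hy : y ∈ Sseq i
      · rw [Finset.insert_eq_self.mpr hy]
        linarith
      · rw [hins]; exact hmax y hy
    rw [Finset.sum_const, hcard, nsmul_eq_mul] at h3
    linarith
  -- geometric decay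
  have decay : ∀ j ≤ k, g Sstar - g (Sseq j) ≤ (1 - 1 / kr) ^ j * g Sstar := by
    intro j hj
    induction j with
    | zero => simp [h0, hempty]
    | succ n ih =>
      have hn : n < k := Nat.lt_of_succ_le hj
      have ihn := ih (Nat.le_of_lt hn)
      have hkey := key n hn
      have hstep : g Sstar - g (Sseq (n + 1)) ≤ (1 - 1 / kr) * (g Sstar - g (Sseq n)) := by
        have h : kr * (g Sstar - g (Sseq (n + 1)))
            ≤ kr * ((1 - 1 / kr) * (g Sstar - g (Sseq n))) := by
          have heq : kr * ((1 - 1 / kr) * (g Sstar - g (Sseq n)))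
              = (kr - 1) * (g Sstar - g (Sseq n)) := by
            field_simp
          rw [heq]; nlinarith [hkey]
        exact le_of_mul_le_mul_left h hkrpos
      have hfac : (0 : ℝ) ≤ 1 - 1 / kr := by
        have : 1 / kr ≤ 1 := by
          rw [div_le_one hkrpos]; exact hkr1
        linarith
      calc g Sstar - g (Sseq (n + 1)) ≤ (1 - 1 / kr) * (g Sstar - g (Sseq n)) := hstep
        _ ≤ (1 - 1 / kr) * ((1 - 1 / kr) ^ n * g Sstar) :=
            mul_le_mul_of_nonneg_left ihn hfac
        _ = (1 - 1 / kr) ^ (n + 1) * g Sstar := by ring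
  have hfac : (0 : ℝ) ≤ 1 - 1 / kr := by
    have : 1 / kr ≤ 1 := by rw [div_le_one hkrpos]; exact hkr1
    linarith
  have hexp : (1 - 1 / kr) ^ k ≤ 1 / Real.exp 1 := by
    have h1 : 1 - 1 / kr ≤ Real.exp (-(1 / kr)) := by
      have := Real.add_one_le_exp (-(1 / kr))
      linarith
    have h2 : (1 - 1 / kr) ^ k ≤ Real.exp (-(1 / kr)) ^ k :=
      pow_le_pow_left₀ hfac h1 k
    have h3 : Real.exp (-(1 / kr)) ^ k = Real.exp (k * (-(1 / kr))) :=
      (Real.exp_nat_mul _ k).symm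
    have h4 : (k : ℝ) * (-(1 / kr)) = -1 := by
      field_simp
      rw [hkr]
    rw [h3, h4] at h2
    simpa [Real.exp_neg, one_div] using h2
  have hg0 : 0 ≤ g Sstar := hnonneg _
  have hfin := decay k le_rfl
  have : (1 - 1 / kr) ^ k * g Sstar ≤ (1 / Real.exp 1) * g Sstar :=
    mul_le_mul_of_nonneg_right hexp hg0
  nlinarith
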